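/- (Theorem 2) Let m ≥ 2, let α : Fin m → ℂ with α i ≠ 0 for every i, and let 𝔻 be an m-mode displacement operator with parameters (fun i => −(α i)/2). Let φ be a unit vector in the m-mode Hilbert space such that: (a) for every l with l+1 < m, φ is fixed by the operator (I ⊗ P₀ + P_{α l} ⊗ I − P_{α l} ⊗ P₀) acting on modes (l, l+1) and by the operator (I ⊗ P_{α(l+1)} + P₀ ⊗ I − P₀ ⊗ P_{α(l+1)}) acting on modes (l, l+1); and (b) (𝔻 φ) k = 0 for every k : Fin m → ℕ with Σ_i k i odd. Then there exists c ∈ ℂ with |c| = 1 such that φ = c • ψ^{GHZ-m}, where ψ^{GHZ-m} = (2(1 + exp(−(Σ_i |α i|²)/2)))^{−1/2} • (Coh α + Coh 0). -/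

import Mathlib

open scoped ComplexConjugate ENNReal

/-- The components of the coherent state `|α⟩`: `exp(−|α|²/2)·αⁿ/√(n!)`. -/
noncomputable def cohFun (α : ℂ) : ℕ → ℂ := fun n =>
  (Real.exp (-‖α‖ ^ 2 / 2) / Real.sqrt (Nat.factorial n) : ℝ) * α ^ n

lemma cohFun_memℓp (α : ℂ) : Memℓp (cohFun α) 2 := by
  apply memℓp_gen
  have h : Summable (fun n : ℕ =>
      Real.exp (-‖α‖ ^ 2 / 2) ^ 2 * ((‖α‖ ^ 2) ^ n / (Nat.factorial n))) :=
    (Real.summable_pow_div_factorial (‖α‖ ^ 2)).mul_left _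
  refine h.congr fun n => ?_
  have h2 : ((2 : ℝ≥0∞).toReal) = (2 : ℝ) := by norm_num
  rw [h2, Real.rpow_two]
  have hn : ‖cohFun α n‖ = Real.exp (-‖α‖ ^ 2 / 2) / Real.sqrt (Nat.factorial n) * ‖α‖ ^ n := by
    simp only [cohFun, norm_mul, norm_pow, Complex.norm_real, Real.norm_eq_abs]
    rw [abs_of_pos (by positivity)]
  rw [hn, mul_pow, div_pow, Real.sq_sqrt (by positivity), pow_right_comm]
  ring

/-- The coherent state `|α⟩` as an element of `ℓ²(ℕ, ℂ)`. -/
noncomputable def coh (α : ℂ) : lp (fun _ : ℕ => ℂ) 2 := ⟨cohFun α, cohFun_memℓp α⟩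

/-- Components of the `m`-mode product coherent state. -/
noncomputable def CohFun {m : ℕ} (γ : Fin m → ℂ) : (Fin m → ℕ) → ℂ :=
  fun k => ∏ i, cohFun (γ i) (k i)

lemma CohFun_summable : ∀ (m : ℕ) (γ : Fin m → ℂ),
    Summable fun k : Fin m → ℕ => ∏ i, ‖cohFun (γ i) (k i)‖ ^ ((2 : ℝ≥0∞).toReal) := by
  intro m
  induction m with
  | zero =>
    intro γ
    haveI : Unique (Fin 0 → ℕ) := ⟨⟨fun i => i.elim0⟩, fun f => funext fun i => i.elim0⟩
    exact Summable.of_finite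
  | succ m ih =>
    intro γ
    have h0 : Summable fun x : ℕ => ‖cohFun (γ 0) x‖ ^ ((2 : ℝ≥0∞).toReal) :=
      (cohFun_memℓp (γ 0)).summable (by norm_num)
    have hrest := ih (fun i => γ i.succ)
    have hprod := h0.mul_of_nonneg hrest
      (fun x => Real.rpow_nonneg (norm_nonneg _) _)
      (fun k => Finset.prod_nonneg fun i _ => Real.rpow_nonneg (norm_nonneg _) _)
    refine (Fin.consEquiv fun _ : Fin (m + 1) => ℕ).summable_iff.1 (hprod.congr ?_)
    rintro ⟨x, k⟩
    show _ = ∏ i, ‖cohFun (γ i) (((Fin.consEquiv fun _ : Fin (m + 1) => ℕ) (x, k)) i)‖ ^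
      ((2 : ℝ≥0∞).toReal)
    rw [Fin.prod_univ_succ]
    simp [Fin.consEquiv, Fin.cons_zero, Fin.cons_succ]

lemma CohFun_memℓp {m : ℕ} (γ : Fin m → ℂ) : Memℓp (CohFun γ) 2 := by
  apply memℓp_gen
  refine (CohFun_summable m γ).congr fun k => ?_
  rw [CohFun, norm_prod, ← Real.finset_prod_rpow _ _ (fun i _ => norm_nonneg _)]

/-- The `m`-mode product coherent state `⊗ᵢ |γ i⟩` in `lp (fun _ : (Fin m → ℕ) => ℂ) 2`. -/
noncomputable def Coh {m : ℕ} (γ : Fin m → ℂ) : lp (fun _ : Fin m → ℕ => ℂ) 2 :=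
  ⟨CohFun γ, CohFun_memℓp γ⟩

/-- An `m`-mode displacement operator with parameters `γ : Fin m → ℂ`. -/
def IsDisplacement {m : ℕ}
    (𝔻 : lp (fun _ : Fin m → ℕ => ℂ) 2 ≃ₗᵢ[ℂ] lp (fun _ : Fin m → ℕ => ℂ) 2)
    (γ : Fin m → ℂ) : Prop :=
  ∀ β : Fin m → ℂ, 𝔻 (Coh β) =
    Complex.exp (∑ i, (γ i * conj (β i) - conj (γ i) * β i) / 2) • Coh (γ + β)


open scoped Nat in
lemma norm_cohFun (α : ℂ) (n : ℕ) :
    ‖cohFun α n‖ = Real.exp (-‖α‖ ^ 2 / 2) / Real.sqrt (Nat.factorial n) * ‖α‖ ^ n := by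
  simp only [cohFun, norm_mul, norm_pow, Complex.norm_real, Real.norm_eq_abs]
  rw [abs_of_pos (by positivity)]

open scoped Nat in
lemma norm_conj_cohFun_mul (α β : ℂ) (n : ℕ) :
    ‖conj (cohFun α n) * cohFun β n‖
      = Real.exp (-‖α‖ ^ 2 / 2) * Real.exp (-‖β‖ ^ 2 / 2) * ((‖α‖ * ‖β‖) ^ n / n !) := by
  have h : Real.sqrt (n !) * Real.sqrt (n !) = (n ! : ℝ) :=
    Real.mul_self_sqrt (by positivity)
  rw [norm_mul, RCLike.norm_conj, norm_cohFun, norm_cohFun, mul_pow,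
    show Real.exp (-‖α‖ ^ 2 / 2) / Real.sqrt (n !) * ‖α‖ ^ n *
        (Real.exp (-‖β‖ ^ 2 / 2) / Real.sqrt (n !) * ‖β‖ ^ n)
      = Real.exp (-‖α‖ ^ 2 / 2) * Real.exp (-‖β‖ ^ 2 / 2) *
        (‖α‖ ^ n * ‖β‖ ^ n / (Real.sqrt (n !) * Real.sqrt (n !))) from by ring, h]

open scoped Nat in
lemma summable_norm_conj_cohFun_mul (α β : ℂ) :
    Summable fun n => ‖conj (cohFun α n) * cohFun β n‖ := by
  have h : Summable (fun n : ℕ =>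
      (Real.exp (-‖α‖ ^ 2 / 2) * Real.exp (-‖β‖ ^ 2 / 2)) * ((‖α‖ * ‖β‖) ^ n / n !)) :=
    (Real.summable_pow_div_factorial _).mul_left _
  exact h.congr fun n => (norm_conj_cohFun_mul α β n).symm

open scoped Nat in
lemma tsum_conj_cohFun_self (α : ℂ) : ∑' n, conj (cohFun α n) * cohFun α n = 1 := by
  have key : ∀ n : ℕ, conj (cohFun α n) * cohFun α n
      = ((Real.exp (-‖α‖ ^ 2) * ((‖α‖ ^ 2) ^ n / n !) : ℝ) : ℂ) := by
    intro n
    rw [mul_comm, Complex.mul_conj, Complex.normSq_eq_norm_sq]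
    rw [Complex.ofReal_inj]
    rw [norm_cohFun, mul_pow, div_pow, Real.sq_sqrt (by positivity), pow_right_comm,
      show Real.exp (-‖α‖ ^ 2 / 2) ^ 2 = Real.exp (-‖α‖ ^ 2) from by
        rw [sq, ← Real.exp_add]; ring_nf]
    ring
  rw [tsum_congr key, ← Complex.ofReal_tsum]
  rw [tsum_mul_left]
  have h2 : ∑' n : ℕ, (‖α‖ ^ 2) ^ n / (n ! : ℝ) = Real.exp (‖α‖ ^ 2) := by
    rw [Real.exp_eq_exp_ℝ, NormedSpace.exp_eq_tsum_div]
  rw [h2, ← Real.exp_add]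
  norm_num

lemma cohFun_zero_apply' (n : ℕ) : cohFun 0 n = if n = 0 then 1 else 0 := by
  rcases n with - | n <;> simp [cohFun]

lemma cohFun_ne_zero {α : ℂ} (hα : α ≠ 0) (n : ℕ) : cohFun α n ≠ 0 := by
  apply mul_ne_zero
  · rw [Ne, Complex.ofReal_eq_zero]
    positivity
  · exact pow_ne_zero _ hα

lemma cohFun_apply_zero (z : ℂ) : cohFun z 0 = (Real.exp (-‖z‖ ^ 2 / 2) : ℝ) := by
  simp [cohFun]

lemma cohFun_apply_one (z : ℂ) : cohFun z 1 = (Real.exp (-‖z‖ ^ 2 / 2) : ℝ) * z := by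
  simp [cohFun]

lemma summable_norm_prod {m : ℕ} (f : Fin m → ℕ → ℂ)
    (hf : ∀ i, Summable fun n => ‖f i n‖) :
    Summable fun k : Fin m → ℕ => ∏ i, ‖f i (k i)‖ := by
  induction m with
  | zero =>
    haveI : Unique (Fin 0 → ℕ) := ⟨⟨fun i => i.elim0⟩, fun f => funext fun i => i.elim0⟩
    exact Summable.of_finite
  | succ m ih =>
    have hprod := (hf 0).mul_of_nonneg (ih (fun i => f i.succ) (fun i => hf i.succ))
      (fun x => norm_nonneg _)
      (fun k => Finset.prod_nonneg fun i _ => norm_nonneg _)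
    refine (Fin.consEquiv fun _ : Fin (m + 1) => ℕ).summable_iff.1 (hprod.congr ?_)
    rintro ⟨x, k⟩
    show _ = ∏ i, ‖f i (((Fin.consEquiv fun _ : Fin (m + 1) => ℕ) (x, k)) i)‖
    rw [Fin.prod_univ_succ]
    simp [Fin.consEquiv, Fin.cons_zero, Fin.cons_succ]

lemma tsum_prod_pi {m : ℕ} (f : Fin m → ℕ → ℂ) (hf : ∀ i, Summable fun n => ‖f i n‖) :
    ∑' k : Fin m → ℕ, ∏ i, f i (k i) = ∏ i, ∑' n, f i n := by
  induction m with
  | zero =>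
    rw [tsum_eq_single (fun i => i.elim0 : Fin 0 → ℕ)
      (fun b hb => absurd (funext fun i => i.elim0) hb)]
    simp
  | succ m ih =>
    rw [← (Fin.consEquiv fun _ : Fin (m + 1) => ℕ).tsum_eq]
    have hcongr : ∀ p : ℕ × (Fin m → ℕ),
        (∏ i, f i (((Fin.consEquiv fun _ : Fin (m + 1) => ℕ) p) i))
          = f 0 p.1 * ∏ i, f i.succ (p.2 i) := by
      rintro ⟨x, k⟩
      rw [Fin.prod_univ_succ]
      simp [Fin.consEquiv, Fin.cons_zero, Fin.cons_succ]
    rw [tsum_congr hcongr, ← tsum_mul_tsum_of_summable_norm (hf 0)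
      (((summable_norm_prod _ fun i => hf i.succ)).congr fun k =>
        (norm_prod _ _).symm),
      ih _ (fun i => hf i.succ), Fin.prod_univ_succ]

lemma inner_Coh {m : ℕ} (γ β : Fin m → ℂ) :
    (inner ℂ (Coh γ) (Coh β) : ℂ) = ∏ i, ∑' n, conj (cohFun (γ i) n) * cohFun (β i) n := by
  rw [lp.inner_eq_tsum]
  simp only [RCLike.inner_apply']
  rw [← tsum_prod_pi (fun i n => conj (cohFun (γ i) n) * cohFun (β i) n)
    (fun i => summable_norm_conj_cohFun_mul _ _)]
  refine tsum_congr fun k => ?_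
  show conj (CohFun γ k) * CohFun β k = _
  rw [CohFun, CohFun, map_prod, ← Finset.prod_mul_distrib]

lemma inner_Coh_self {m : ℕ} (γ : Fin m → ℂ) : (inner ℂ (Coh γ) (Coh γ) : ℂ) = 1 := by
  rw [inner_Coh]
  simp [tsum_conj_cohFun_self]

lemma norm_Coh {m : ℕ} (γ : Fin m → ℂ) : ‖Coh γ‖ = 1 := by
  have h : ‖Coh γ‖ ^ 2 = 1 := by
    have h2 := @inner_self_eq_norm_sq ℂ _ _ _ _ (Coh γ)
    rw [inner_Coh_self] at h2
    simpa using h2.symm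
  nlinarith [norm_nonneg (Coh γ)]

lemma CohFun_zero_apply {m : ℕ} (k : Fin m → ℕ) :
    CohFun (0 : Fin m → ℂ) k = if k = 0 then 1 else 0 := by
  by_cases hk : k = 0
  · subst hk
    rw [if_pos rfl, CohFun]
    have h1 : ∀ i : Fin m, cohFun ((0 : Fin m → ℂ) i) ((0 : Fin m → ℕ) i) = 1 := by
      intro i
      show cohFun 0 0 = 1
      rw [cohFun_zero_apply']
      simp
    rw [Finset.prod_congr rfl fun i _ => h1 i, Finset.prod_const_one]
  · rw [if_neg hk]
    obtain ⟨i, hi⟩ : ∃ i, k i ≠ 0 := by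
      by_contra h
      push_neg at h
      exact hk (funext h)
    refine Finset.prod_eq_zero (Finset.mem_univ i) ?_
    show cohFun 0 (k i) = 0
    rw [cohFun_zero_apply', if_neg hi]

lemma CohFun_apply_zero {m : ℕ} (γ : Fin m → ℂ) :
    CohFun γ (0 : Fin m → ℕ) = (Real.exp (-(∑ i, ‖γ i‖ ^ 2) / 2) : ℝ) := by
  rw [CohFun]
  have h1 : ∀ i : Fin m, cohFun (γ i) ((0 : Fin m → ℕ) i)
      = ((Real.exp (-‖γ i‖ ^ 2 / 2) : ℝ) : ℂ) := fun i => cohFun_apply_zero (γ i)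
  rw [Finset.prod_congr rfl fun i _ => h1 i, ← Complex.ofReal_prod, ← Real.exp_sum]
  congr 2
  rw [← Finset.sum_div, ← Finset.sum_neg_distrib]

lemma inner_Coh_zero {m : ℕ} (γ : Fin m → ℂ) :
    (inner ℂ (Coh γ) (Coh (0 : Fin m → ℂ)) : ℂ)
      = (Real.exp (-(∑ i, ‖γ i‖ ^ 2) / 2) : ℝ) := by
  rw [lp.inner_eq_tsum]
  simp only [RCLike.inner_apply']
  rw [tsum_eq_single (0 : Fin m → ℕ) (fun k hk => by
    show conj (CohFun γ k) * CohFun (0 : Fin m → ℂ) k = 0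
    rw [CohFun_zero_apply, if_neg hk, mul_zero])]
  show conj (CohFun γ 0) * CohFun (0 : Fin m → ℂ) 0 = _
  rw [CohFun_zero_apply, if_pos rfl, mul_one, CohFun_apply_zero, Complex.conj_ofReal]

lemma norm_Coh_add {m : ℕ} (α : Fin m → ℂ) :
    ‖Coh α + Coh (0 : Fin m → ℂ)‖
      = Real.sqrt (2 * (1 + Real.exp (-(∑ i, ‖α i‖ ^ 2) / 2))) := by
  have hsq : ‖Coh α + Coh (0 : Fin m → ℂ)‖ ^ 2
      = 2 * (1 + Real.exp (-(∑ i, ‖α i‖ ^ 2) / 2)) := by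
    rw [@norm_add_sq ℂ _ _ _ _ (Coh α) (Coh (0 : Fin m → ℂ)), norm_Coh, norm_Coh,
      inner_Coh_zero]
    simp only [RCLike.re_to_complex, Complex.ofReal_re]
    ring
  rw [← hsq, Real.sqrt_sq (norm_nonneg _)]

lemma connect_ones {m : ℕ} (hm : 2 ≤ m) (ψ : (Fin m → ℕ) → ℂ)
    (H1 : ∀ (l : ℕ) (hl : l + 1 < m) (k : Fin m → ℕ) (j : ℕ), k ⟨l+1, hl⟩ ≠ 0 →
      ψ (Function.update k ⟨l, Nat.lt_of_succ_lt hl⟩ j) = ψ k)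
    (H2 : ∀ (l : ℕ) (hl : l + 1 < m) (k : Fin m → ℕ) (j : ℕ),
      k ⟨l, Nat.lt_of_succ_lt hl⟩ ≠ 0 → ψ (Function.update k ⟨l+1, hl⟩ j) = ψ k)
    (k : Fin m → ℕ) (i : Fin m) (hk : k i ≠ 0) : ψ k = ψ (fun _ => 1) := by
  suffices h : ∀ (k : Fin m → ℕ) (i : ℕ) (hi : i + 1 < m), k ⟨i, Nat.lt_of_succ_lt hi⟩ ≠ 0 →
      ψ k = ψ (fun _ => 1) by
    by_cases hi : (i : ℕ) + 1 < m
    · have h2 := h k i hi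
      rw [show (⟨(i:ℕ), Nat.lt_of_succ_lt hi⟩ : Fin m) = i from Fin.ext rfl] at h2
      exact h2 hk
    · have him : (i : ℕ) = m - 1 := by omega
      have h2 : m - 2 + 1 < m := by omega
      have hlast : (⟨m - 2 + 1, h2⟩ : Fin m) = i := Fin.ext (by simp; omega)
      have step := H1 (m - 2) h2 k 1 (by rw [hlast]; exact hk)
      rw [← step]
      apply h _ (m - 2) h2
      simp [Function.update_self]
  clear hk i k
  intro k i hi hk
  have right : ∀ t, i + t < m →
      ψ (fun j => if i < (j : ℕ) ∧ (j : ℕ) ≤ i + t then 1 else k j) = ψ k := by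
    intro t
    induction t with
    | zero =>
      intro _
      congr 1
      funext j
      simp only [Nat.add_zero]
      split
      · omega
      · rfl
    | succ t ih =>
      intro ht
      have ht' : i + t < m := by omega
      rw [← ih ht']
      have hupdate : (fun j : Fin m => if i < (j:ℕ) ∧ (j:ℕ) ≤ i + (t+1) then 1 else k j)
          = Function.update (fun j : Fin m => if i < (j:ℕ) ∧ (j:ℕ) ≤ i + t then 1 else k j)
              ⟨i + t + 1, by omega⟩ 1 := by
        funext j
        rcases eq_or_ne j ⟨i + t + 1, by omega⟩ with hj | hj
        · subst hj; rw [Function.update_self]; simp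
        · rw [Function.update_of_ne hj]
          have : (j : ℕ) ≠ i + t + 1 := fun h => hj (Fin.ext h)
          by_cases hc : i < (j:ℕ) ∧ (j:ℕ) ≤ i + t
          · rw [if_pos hc, if_pos ⟨hc.1, by omega⟩]
          · rw [if_neg hc, if_neg (by omega)]
      rw [hupdate]
      refine H2 (i + t) (by omega) _ 1 ?_
      show (if i < i + t ∧ i + t ≤ i + t then 1 else k ⟨i + t, _⟩) ≠ 0
      rcases Nat.eq_zero_or_pos t with h0 | h0
      · subst h0
        rw [if_neg (by omega)]
        convert hk using 2
        simp
      · rw [if_pos ⟨by omega, le_refl _⟩]; exact one_ne_zero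
  have hstar := right (m - 1 - i) (by omega)
  have left : ∀ s, s ≤ i + 1 →
      ψ (fun j => if i + 1 - s ≤ (j : ℕ) then 1 else k j)
        = ψ (fun j => if i < (j : ℕ) ∧ (j : ℕ) ≤ i + (m - 1 - i) then 1 else k j) := by
    intro s
    induction s with
    | zero =>
      intro _
      congr 1
      funext j
      have hj := j.isLt
      split <;> split <;> first | rfl | omega
    | succ s ih =>
      intro hs
      rw [← ih (by omega)]
      have hupdate : (fun j : Fin m => if i + 1 - (s+1) ≤ (j:ℕ) then 1 else k j)
          = Function.update (fun j : Fin m => if i + 1 - s ≤ (j:ℕ) then 1 else k j)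
              ⟨i - s, by omega⟩ 1 := by
        funext j
        rcases eq_or_ne j ⟨i - s, by omega⟩ with hj | hj
        · subst hj; rw [Function.update_self, if_pos (by simp only [Fin.val_mk]; omega)]
        · rw [Function.update_of_ne hj]
          have : (j : ℕ) ≠ i - s := fun h => hj (Fin.ext h)
          by_cases hc : i + 1 - s ≤ (j : ℕ)
          · rw [if_pos (by omega), if_pos hc]
          · rw [if_neg (by omega), if_neg hc]
      rw [hupdate]
      refine H1 (i - s) (by omega) _ 1 ?_
      show (if i + 1 - s ≤ i - s + 1 then 1 else k ⟨i - s + 1, _⟩) ≠ 0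
      rw [if_pos (by omega)]
      exact one_ne_zero
  have hfin := left (i + 1) (le_refl _)
  rw [hstar] at hfin
  rw [← hfin]
  congr 1
  funext j
  rw [if_pos (by omega)]

lemma CohFun_update {m : ℕ} (γ : Fin m → ℂ) (g : Fin m → ℕ) (L : Fin m) (j : ℕ) :
    CohFun γ (Function.update g L j)
      = cohFun (γ L) j * ∏ i ∈ Finset.univ.erase L, cohFun (γ i) (g i) := by
  rw [CohFun, ← Finset.mul_prod_erase Finset.univ _ (Finset.mem_univ L),
    Function.update_self]
  congr 1
  exact Finset.prod_congr rfl fun i hi => by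
    rw [Function.update_of_ne (Finset.ne_of_mem_erase hi)]

lemma psi_update {m : ℕ} (α : Fin m → ℂ) (hα : ∀ i, α i ≠ 0)
    (φ : (Fin m → ℕ) → ℂ) (L L1 : Fin m) (hne : L1 ≠ L)
    (hrel : ∀ k' : Fin m → ℕ, k' L1 ≠ 0 → φ k' = cohFun (α L) (k' L) *
      ∑' j', conj (cohFun (α L) j') * φ (Function.update k' L j'))
    (k : Fin m → ℕ) (j : ℕ) (hk : k L1 ≠ 0) :
    φ (Function.update k L j) / CohFun α (Function.update k L j) = φ k / CohFun α k := by
  have hPk : CohFun α k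
      = cohFun (α L) (k L) * ∏ i ∈ Finset.univ.erase L, cohFun (α i) (k i) :=
    (Finset.mul_prod_erase Finset.univ _ (Finset.mem_univ L)).symm
  have e2 := hrel k hk
  have e1 := hrel (Function.update k L j) (by rwa [Function.update_of_ne hne])
  rw [Function.update_self] at e1
  have hA : (∑' j', conj (cohFun (α L) j')
        * φ (Function.update (Function.update k L j) L j'))
      = ∑' j', conj (cohFun (α L) j') * φ (Function.update k L j') :=
    tsum_congr fun j' => by rw [Function.update_idem]
  rw [hA] at e1
  rw [e1, e2, CohFun_update, hPk, mul_div_mul_left _ _ (cohFun_ne_zero (hα L) j),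
    mul_div_mul_left _ _ (cohFun_ne_zero (hα L) (k L))]


/-- Theorem 2: a unit vector passing all the local two-mode settings and
the displaced even-parity measurement equals the m-mode GHZ-like coherent state
`ψ^{GHZ-m}` up to a phase. -/
theorem ghz_verification (m : ℕ) (hm : 2 ≤ m) (α : Fin m → ℂ) (hα : ∀ i, α i ≠ 0)
    (𝔻 : lp (fun _ : Fin m → ℕ => ℂ) 2 ≃ₗᵢ[ℂ] lp (fun _ : Fin m → ℕ => ℂ) 2)
    (h𝔻 : IsDisplacement 𝔻 (fun i => -(α i) / 2))
    (φ : lp (fun _ : Fin m → ℕ => ℂ) 2) (hnorm : ‖φ‖ = 1)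
    (ha₁ : ∀ (l : ℕ) (hl : l + 1 < m) (k : Fin m → ℕ),
      φ k
        = cohFun 0 (k ⟨l + 1, hl⟩) *
            (∑' j : ℕ, conj (cohFun 0 j) * φ (Function.update k ⟨l + 1, hl⟩ j))
        + cohFun (α ⟨l, Nat.lt_of_succ_lt hl⟩) (k ⟨l, Nat.lt_of_succ_lt hl⟩) *
            (∑' j : ℕ, conj (cohFun (α ⟨l, Nat.lt_of_succ_lt hl⟩) j) *
              φ (Function.update k ⟨l, Nat.lt_of_succ_lt hl⟩ j))
        - cohFun (α ⟨l, Nat.lt_of_succ_lt hl⟩) (k ⟨l, Nat.lt_of_succ_lt hl⟩) *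
            cohFun 0 (k ⟨l + 1, hl⟩) *
            (∑' j : ℕ, ∑' j' : ℕ,
              conj (cohFun (α ⟨l, Nat.lt_of_succ_lt hl⟩) j) * conj (cohFun 0 j') *
                φ (Function.update (Function.update k ⟨l, Nat.lt_of_succ_lt hl⟩ j)
                    ⟨l + 1, hl⟩ j')))
    (ha₂ : ∀ (l : ℕ) (hl : l + 1 < m) (k : Fin m → ℕ),
      φ k
        = cohFun (α ⟨l + 1, hl⟩) (k ⟨l + 1, hl⟩) *
            (∑' j : ℕ, conj (cohFun (α ⟨l + 1, hl⟩) j) * φ (Function.update k ⟨l + 1, hl⟩ j))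
        + cohFun 0 (k ⟨l, Nat.lt_of_succ_lt hl⟩) *
            (∑' j : ℕ, conj (cohFun 0 j) * φ (Function.update k ⟨l, Nat.lt_of_succ_lt hl⟩ j))
        - cohFun 0 (k ⟨l, Nat.lt_of_succ_lt hl⟩) *
            cohFun (α ⟨l + 1, hl⟩) (k ⟨l + 1, hl⟩) *
            (∑' j : ℕ, ∑' j' : ℕ,
              conj (cohFun 0 j) * conj (cohFun (α ⟨l + 1, hl⟩) j') *
                φ (Function.update (Function.update k ⟨l, Nat.lt_of_succ_lt hl⟩ j)
                    ⟨l + 1, hl⟩ j')))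
    (hb : ∀ k : Fin m → ℕ, Odd (∑ i, k i) → (𝔻 φ) k = 0) :
    ∃ c : ℂ, ‖c‖ = 1 ∧
      φ = c • (((Real.sqrt (2 * (1 + Real.exp (-(∑ i, ‖α i‖ ^ 2) / 2))))⁻¹ : ℂ) •
        (Coh α + Coh (0 : Fin m → ℂ))) := by
  have hm0 : 0 < m := by omega
  have hD : ∀ k : Fin m → ℕ, CohFun α k ≠ 0 := fun k =>
    Finset.prod_ne_zero_iff.mpr fun i _ => cohFun_ne_zero (hα i) _
  have H1 : ∀ (l : ℕ) (hl : l + 1 < m) (k : Fin m → ℕ) (j : ℕ), k ⟨l + 1, hl⟩ ≠ 0 →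
      φ (Function.update k ⟨l, Nat.lt_of_succ_lt hl⟩ j)
        / CohFun α (Function.update k ⟨l, Nat.lt_of_succ_lt hl⟩ j)
      = φ k / CohFun α k := by
    intro l hl k j hk
    refine psi_update α hα (fun k => φ k) ⟨l, Nat.lt_of_succ_lt hl⟩ ⟨l + 1, hl⟩
      (by simp [Fin.ext_iff]) ?_ k j hk
    intro k' hk'
    have h0 : cohFun 0 (k' ⟨l + 1, hl⟩) = 0 := by
      rw [cohFun_zero_apply', if_neg hk']
    have h := ha₁ l hl k'
    simp only [h0, zero_mul, mul_zero, zero_add, sub_zero] at h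
    exact h
  have H2 : ∀ (l : ℕ) (hl : l + 1 < m) (k : Fin m → ℕ) (j : ℕ),
      k ⟨l, Nat.lt_of_succ_lt hl⟩ ≠ 0 →
      φ (Function.update k ⟨l + 1, hl⟩ j) / CohFun α (Function.update k ⟨l + 1, hl⟩ j)
      = φ k / CohFun α k := by
    intro l hl k j hk
    refine psi_update α hα (fun k => φ k) ⟨l + 1, hl⟩ ⟨l, Nat.lt_of_succ_lt hl⟩
      (by simp [Fin.ext_iff]) ?_ k j hk
    intro k' hk'
    have h0 : cohFun 0 (k' ⟨l, Nat.lt_of_succ_lt hl⟩) = 0 := by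
      rw [cohFun_zero_apply', if_neg hk']
    have h := ha₂ l hl k'
    simp only [h0, zero_mul, mul_zero, add_zero, sub_zero] at h
    exact h
  obtain ⟨a, hconst⟩ : ∃ a : ℂ, ∀ k : Fin m → ℕ, (∃ i, k i ≠ 0) → φ k = a * CohFun α k := by
    refine ⟨φ (fun _ => 1) / CohFun α (fun _ => 1), fun k hk => ?_⟩
    obtain ⟨i, hi⟩ := hk
    have h := connect_ones hm (fun k => φ k / CohFun α k) H1 H2 k i hi
    have h' : (φ k : ℂ) / CohFun α k = φ (fun _ => 1) / CohFun α (fun _ => 1) := h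
    rw [← h', div_mul_cancel₀ _ (hD k)]
  obtain ⟨b, hφrep⟩ : ∃ b : ℂ, ∀ k : Fin m → ℕ,
      φ k = a * CohFun α k + b * CohFun (0 : Fin m → ℂ) k := by
    refine ⟨φ 0 - a * CohFun α 0, fun k => ?_⟩
    by_cases hk : k = (0 : Fin m → ℕ)
    · subst hk
      rw [CohFun_zero_apply, if_pos rfl]
      ring
    · have hex : ∃ i, k i ≠ 0 := by
        by_contra h
        push_neg at h
        exact hk (funext h)
      rw [CohFun_zero_apply, if_neg hk, mul_zero, add_zero]
      exact hconst k hex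
  have hφeq : φ = a • Coh α + b • Coh (0 : Fin m → ℂ) := by
    apply lp.ext
    rw [lp.coeFn_add, lp.coeFn_smul, lp.coeFn_smul]
    funext k
    simp only [Pi.add_apply, Pi.smul_apply, smul_eq_mul]
    exact hφrep k
  -- parity forces a = b
  have hDCohα : 𝔻 (Coh α) = Coh ((fun i => -(α i) / 2) + α) := by
    have h := h𝔻 α
    have hz : (∑ i, ((fun i => -(α i) / 2) i * conj (α i)
        - conj ((fun i => -(α i) / 2) i) * α i) / 2) = 0 := by
      refine Finset.sum_eq_zero fun i _ => ?_
      simp only [map_neg, map_div₀, map_ofNat]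
      ring
    rw [hz, Complex.exp_zero, one_smul] at h
    exact h
  have hDCoh0 : 𝔻 (Coh (0 : Fin m → ℂ)) = Coh ((fun i => -(α i) / 2) + 0) := by
    have h := h𝔻 0
    have hz : (∑ i, ((fun i => -(α i) / 2) i * conj ((0 : Fin m → ℂ) i)
        - conj ((fun i => -(α i) / 2) i) * (0 : Fin m → ℂ) i) / 2) = 0 := by
      refine Finset.sum_eq_zero fun i _ => ?_
      simp
    rw [hz, Complex.exp_zero, one_smul] at h
    exact h
  have hDφ : 𝔻 φ = a • Coh ((fun i => -(α i) / 2) + α)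
      + b • Coh ((fun i => -(α i) / 2) + 0) := by
    rw [hφeq, map_add, map_smul, map_smul, hDCohα, hDCoh0]
  have hk₀sum : ∑ i, Function.update (0 : Fin m → ℕ) ⟨0, hm0⟩ 1 i = 1 := by
    rw [Finset.sum_update_of_mem (Finset.mem_univ _)]
    simp
  have heval : a * CohFun ((fun i => -(α i) / 2) + α)
        (Function.update (0 : Fin m → ℕ) ⟨0, hm0⟩ 1)
      + b * CohFun ((fun i => -(α i) / 2) + 0)
        (Function.update (0 : Fin m → ℕ) ⟨0, hm0⟩ 1) = 0 := by
    have h := hb (Function.update (0 : Fin m → ℕ) ⟨0, hm0⟩ 1) (by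
      rw [hk₀sum]; exact odd_one)
    rw [hDφ, lp.coeFn_add, lp.coeFn_smul, lp.coeFn_smul] at h
    show a * (Coh ((fun i => -(α i) / 2) + α) : (Fin m → ℕ) → ℂ) (Function.update (0 : Fin m → ℕ) ⟨0, hm0⟩ 1) + b * (Coh ((fun i => -(α i) / 2) + 0) : (Fin m → ℕ) → ℂ) (Function.update (0 : Fin m → ℕ) ⟨0, hm0⟩ 1) = 0
    simpa using h
  have hnegrep : CohFun ((fun i => -(α i) / 2) + 0)
        (Function.update (0 : Fin m → ℕ) ⟨0, hm0⟩ 1)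
      = - CohFun ((fun i => -(α i) / 2) + α)
        (Function.update (0 : Fin m → ℕ) ⟨0, hm0⟩ 1) := by
    rw [CohFun_update, CohFun_update]
    have hnormi : ∀ i : Fin m, ‖((fun i => -(α i) / 2) + 0) i‖
        = ‖((fun i => -(α i) / 2) + α) i‖ := by
      intro i
      have hrewrite : ((fun i => -(α i) / 2) + 0) i = -(((fun i => -(α i) / 2) + α) i) := by
        simp only [Pi.add_apply, Pi.zero_apply]
        ring
      rw [hrewrite, norm_neg]
    have hhead : cohFun (((fun i => -(α i) / 2) + 0) ⟨0, hm0⟩) 1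
        = - cohFun (((fun i => -(α i) / 2) + α) ⟨0, hm0⟩) 1 := by
      rw [cohFun_apply_one, cohFun_apply_one, hnormi,
        show ((fun i => -(α i) / 2) + 0) ⟨0, hm0⟩
          = -(((fun i => -(α i) / 2) + α) ⟨0, hm0⟩) from by
            simp only [Pi.add_apply, Pi.zero_apply]; ring]
      ring
    have htail : ∏ i ∈ Finset.univ.erase (⟨0, hm0⟩ : Fin m),
          cohFun (((fun i => -(α i) / 2) + 0) i) ((0 : Fin m → ℕ) i)
        = ∏ i ∈ Finset.univ.erase (⟨0, hm0⟩ : Fin m),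
          cohFun (((fun i => -(α i) / 2) + α) i) ((0 : Fin m → ℕ) i) := by
      refine Finset.prod_congr rfl fun i _ => ?_
      show cohFun _ 0 = cohFun _ 0
      rw [cohFun_apply_zero, cohFun_apply_zero, hnormi]
    rw [hhead, htail]
    ring
  have hX : CohFun ((fun i => -(α i) / 2) + α)
      (Function.update (0 : Fin m → ℕ) ⟨0, hm0⟩ 1) ≠ 0 := by
    refine Finset.prod_ne_zero_iff.mpr fun i _ => ?_
    refine cohFun_ne_zero ?_ _
    show -(α i) / 2 + α i ≠ 0
    rw [show -(α i) / 2 + α i = α i / 2 from by ring]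
    exact div_ne_zero (hα i) two_ne_zero
  have hab : a = b := by
    rw [hnegrep] at heval
    have hz : (a - b) * CohFun ((fun i => -(α i) / 2) + α)
        (Function.update (0 : Fin m → ℕ) ⟨0, hm0⟩ 1) = 0 := by
      linear_combination heval
    rcases mul_eq_zero.mp hz with h | h
    · exact sub_eq_zero.mp h
    · exact absurd h hX
  have hφeq' : φ = a • (Coh α + Coh (0 : Fin m → ℂ)) := by
    rw [smul_add, hφeq, hab]
  have hS : ‖Coh α + Coh (0 : Fin m → ℂ)‖
      = Real.sqrt (2 * (1 + Real.exp (-(∑ i, ‖α i‖ ^ 2) / 2))) := norm_Coh_add α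
  have hSpos : 0 < Real.sqrt (2 * (1 + Real.exp (-(∑ i, ‖α i‖ ^ 2) / 2))) :=
    Real.sqrt_pos.mpr (by positivity)
  have habs : ‖a‖ * Real.sqrt (2 * (1 + Real.exp (-(∑ i, ‖α i‖ ^ 2) / 2))) = 1 := by
    have h1 : ‖φ‖ = ‖a‖ * ‖Coh α + Coh (0 : Fin m → ℂ)‖ := by
      rw [hφeq', norm_smul]
    rw [h1, hS] at hnorm
    exact hnorm
  have hSne : ((Real.sqrt (2 * (1 + Real.exp (-(∑ i, ‖α i‖ ^ 2) / 2))) : ℝ) : ℂ) ≠ 0 :=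
    Complex.ofReal_ne_zero.mpr (ne_of_gt hSpos)
  refine ⟨a * ((Real.sqrt (2 * (1 + Real.exp (-(∑ i, ‖α i‖ ^ 2) / 2))) : ℝ) : ℂ), ?_, ?_⟩
  · rw [norm_mul, Complex.norm_real, Real.norm_eq_abs, abs_of_pos hSpos]
    exact habs
  · rw [hφeq', smul_smul]
    congr 1
    rw [mul_inv_cancel_right₀ hSne]
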